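/- Every infinite virtually cyclic group G either admits an epimorphism onto ℤ (and then G ≅ F ⋊ ℤ with F finite) or admits an epimorphism onto the infinite dihedral group D_∞ with finite kernel. -/

import Mathlib

open Subgroup

/-- An infinite cyclic group is isomorphic to `Multiplicative ℤ`. -/
lemma aux_infCyclic (H : Type*) [Group H] [IsCyclic H] [Infinite H] :
    Nonempty (H ≃* Multiplicative ℤ) := by
  obtain ⟨g, hg⟩ := IsCyclic.exists_generator (α := H)
  have hord : ¬ IsOfFinOrder g := by
    intro h
    have h1 : (Subgroup.zpowers g : Set H).Finite := finite_zpowers.mpr h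
    have h2 : (Subgroup.zpowers g : Set H) = Set.univ := by
      ext x; simp [hg x]
    rw [h2] at h1
    exact Set.infinite_univ h1
  have hinj : Function.Injective (zpowersHom H g) := by
    intro a b hab
    have := (injective_zpow_iff_not_isOfFinOrder (x := g)).2 hord
    exact Multiplicative.toAdd.injective (this hab)
  have hsurj : Function.Surjective (zpowersHom H g) := by
    intro x
    obtain ⟨k, hk⟩ := hg x
    exact ⟨Multiplicative.ofAdd k, hk⟩
  exact ⟨(MulEquiv.ofBijective (zpowersHom H g) ⟨hinj, hsurj⟩).symm⟩

lemma aux_tau_inv (τ : MulAut (Multiplicative ℤ)) (hτ : τ ≠ 1) :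
    ∀ z, τ z = z⁻¹ := by
  set u : ℤ := Multiplicative.toAdd (τ (Multiplicative.ofAdd 1)) with hu
  have key : ∀ z : Multiplicative ℤ,
      τ z = Multiplicative.ofAdd (Multiplicative.toAdd z * u) := by
    intro z
    have hz : z = (Multiplicative.ofAdd (1:ℤ)) ^ (Multiplicative.toAdd z) := by
      rw [← ofAdd_zsmul]; simp
    calc τ z = τ ((Multiplicative.ofAdd (1:ℤ)) ^ (Multiplicative.toAdd z)) := by rw [← hz]
    _ = (τ (Multiplicative.ofAdd (1:ℤ))) ^ (Multiplicative.toAdd z) := by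
        exact map_zpow τ.toMonoidHom _ _
    _ = Multiplicative.ofAdd (Multiplicative.toAdd z * u) := by
        rw [show τ (Multiplicative.ofAdd (1:ℤ)) = Multiplicative.ofAdd u by simp [hu],
          ← ofAdd_zsmul, smul_eq_mul]
  have husurj : ∃ z : Multiplicative ℤ, τ z = Multiplicative.ofAdd 1 :=
    ⟨τ.symm (Multiplicative.ofAdd 1), by simp⟩
  obtain ⟨z, hz⟩ := husurj
  rw [key z] at hz
  have hunit : IsUnit u := IsUnit.of_mul_eq_one (Multiplicative.toAdd z) (by
    have := congrArg Multiplicative.toAdd hz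
    simpa [mul_comm] using this)
  rcases Int.isUnit_iff.mp hunit with h1 | h1
  · exfalso
    apply hτ
    ext w
    rw [key w, h1, mul_one]
    rfl
  · intro w
    rw [key w, h1]
    simp [mul_neg_one]

lemma aux_aut_inv {H : Type*} [Group H] [IsCyclic H] [Infinite H] (σ : MulAut H)
    (hσ : σ ≠ 1) : ∀ x, σ x = x⁻¹ := by
  obtain ⟨e⟩ := aux_infCyclic H
  set τ : MulAut (Multiplicative ℤ) := (e.symm.trans (σ.trans e)) with hτdef
  have hτ : τ ≠ 1 := by
    intro h
    apply hσ
    ext x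
    have : τ (e x) = e x := by rw [h]; rfl
    simpa [hτdef] using this
  intro x
  have h2 := aux_tau_inv τ hτ (e x)
  simp only [hτdef, MulEquiv.trans_apply, MulEquiv.symm_apply_apply] at h2
  have := congrArg e.symm h2
  simpa using this

lemma aux_finite_of_disjoint {G : Type*} [Group G] (N K : Subgroup G) [N.FiniteIndex]
    (h : ∀ x, x ∈ K → x ∈ N → x = 1) : Finite K := by
  have hq : Finite (G ⧸ N) := Subgroup.finite_quotient_of_finiteIndex (H := N)
  have hinj : Function.Injective (fun k : K => (QuotientGroup.mk (k : G) : G ⧸ N)) := by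
    intro a b hab
    rw [QuotientGroup.eq] at hab
    have := h _ (mul_mem (inv_mem a.2) b.2) hab
    have : (a : G) = b := by
      have := congrArg (fun y => (a : G) * y) this
      simpa [mul_assoc] using this.symm
    exact Subtype.ext this
  exact Finite.of_injective _ hinj

lemma aux_torsionfree {H : Type*} [Group H] [IsCyclic H] [Infinite H]
    (x : H) (k : ℤ) (hk : k ≠ 0) (hx : x ^ k = 1) : x = 1 := by
  obtain ⟨e⟩ := aux_infCyclic H
  have h1 : (e x) ^ k = 1 := by rw [← map_zpow, hx, map_one]
  have h2 : k • Multiplicative.toAdd (e x) = 0 := by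
    have := congrArg Multiplicative.toAdd h1
    simpa [toAdd_zpow] using this
  have h3 : Multiplicative.toAdd (e x) = 0 := by
    rcases smul_eq_zero.mp h2 with h | h
    · exact absurd h hk
    · exact h
  have : e x = 1 := by
    have := congrArg Multiplicative.ofAdd h3
    simpa using this
  simpa using congrArg e.symm this


lemma aux_lemA {G : Type} [Group G] (N : Subgroup G) (hc : N ≤ Subgroup.center G)
    [N.FiniteIndex] [Infinite N] [IsCyclic N] :
    ∃ q : G →* Multiplicative ℤ, Function.Surjective q ∧ Finite q.ker := by
  haveI hCfi : (Subgroup.center G).FiniteIndex := Subgroup.finiteIndex_of_le hc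
  set C := Subgroup.center G with hC
  set n := C.index with hn
  set N' := N.subgroupOf C with hN'
  haveI hN'fi : N'.FiniteIndex := by
    refine ⟨?_⟩
    have h1 : N.relIndex C * C.index = N.index := Subgroup.relIndex_mul_index hc
    intro h0
    have : N.relIndex C = 0 := h0
    rw [this, zero_mul] at h1
    have h2 := @Subgroup.FiniteIndex.index_ne_zero G _ N _
    exact h2 h1.symm
  set m := N'.index with hm
  have hm0 : m ≠ 0 := hN'fi.index_ne_zero
  have hn0 : n ≠ 0 := hCfi.index_ne_zero
  set T := MonoidHom.transferCenterPow G with hT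
  have hTa : ∀ g : G, ((T g : G)) = g ^ n := fun g => MonoidHom.transferCenterPow_apply g
  -- the homomorphism G →* N
  have hmem : ∀ g : G, ((T g : C)) ^ m ∈ N' := fun g => N'.pow_index_mem (T g)
  have hmem' : ∀ g : G, ((T g : G)) ^ m ∈ N := by
    intro g
    have := hmem g
    rw [Subgroup.mem_subgroupOf] at this
    simpa using this
  set q0 : G →* N := MonoidHom.mk' (fun g => ⟨((T g : G)) ^ m, hmem' g⟩) (by
    intro g h
    have h1 : T (g * h) = T g * T h := map_mul T g h
    have h2 : ((T (g*h) : G)) = (T g : G) * (T h : G) := by rw [h1]; rfl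
    have hcomm : Commute ((T g : G)) ((T h : G)) :=
      Subgroup.mem_center_iff.mp (T h).2 _
    apply Subtype.ext
    show ((T (g*h) : G)) ^ m = ((T g : G)) ^ m * ((T h : G)) ^ m
    rw [h2, hcomm.mul_pow]) with hq0
  obtain ⟨e⟩ := aux_infCyclic N
  set Q : G →* Multiplicative ℤ := e.toMonoidHom.comp q0 with hQ
  have hQker : ∀ x : G, Q x = 1 ↔ q0 x = 1 := by
    intro x
    constructor
    · intro h
      apply e.injective
      rw [map_one]
      exact h
    · intro h; simp [hQ, h]
  -- kernel of Q is finite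
  have hkerfin : Finite Q.ker := by
    apply aux_finite_of_disjoint N Q.ker
    intro x hx hxN
    have h1 : q0 x = 1 := (hQker x).mp hx
    have h2 : ((x : G)) ^ (n * m) = 1 := by
      have := congrArg (fun y : N => (y : G)) h1
      simp only [hq0] at this
      have h3 : ((T x : G)) ^ m = 1 := this
      rw [hTa x, ← pow_mul] at h3
      exact h3
    have h4 : (⟨x, hxN⟩ : N) ^ (((n * m : ℕ)) : ℤ) = 1 := by
      rw [zpow_natCast]
      apply Subtype.ext
      simpa using h2
    have h5 := aux_torsionfree (⟨x, hxN⟩ : N) (((n * m : ℕ)) : ℤ)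
      (Int.natCast_ne_zero.mpr (mul_ne_zero hn0 hm0)) h4
    simpa using congrArg (fun y : N => (y : G)) h5
  -- range of Q is infinite
  haveI hri : Infinite Q.range := by
    have hinj : Function.Injective (fun x : N => Q x) := by
      intro a b hab
      have hab2 : Q (a : G) = Q (b : G) := hab
      have h1 : Q ((a : G) * (b : G)⁻¹) = 1 := by
        rw [map_mul, map_inv, hab2, mul_inv_cancel]
      have h2 : q0 ((a:G) * (b:G)⁻¹) = 1 := (hQker _).mp h1
      have h3 : ((a:G) * (b:G)⁻¹) ^ (n*m) = 1 := by
        have := congrArg (fun y : N => (y : G)) h2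
        simp only [hq0] at this
        have h3 : ((T ((a:G)*(b:G)⁻¹) : G)) ^ m = 1 := this
        rw [hTa, ← pow_mul] at h3
        exact h3
      have hab' : (a:G) * (b:G)⁻¹ ∈ N := mul_mem a.2 (inv_mem b.2)
      have h4 : (⟨(a:G)*(b:G)⁻¹, hab'⟩ : N) ^ (((n * m : ℕ)) : ℤ) = 1 := by
        rw [zpow_natCast]
        apply Subtype.ext
        simpa using h3
      have h5 := aux_torsionfree _ _ (Int.natCast_ne_zero.mpr (mul_ne_zero hn0 hm0)) h4
      have h6 := congrArg (fun y : N => (y : G)) h5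
      simp at h6
      exact Subtype.ext (by
        have := congrArg (fun y => y * (b:G)) h6
        simpa [mul_assoc] using this)
    exact Infinite.of_injective (fun x : N => (⟨Q x, ⟨x, rfl⟩⟩ : Q.range)) (by
      intro a b hab
      exact hinj (congrArg Subtype.val hab))
  haveI : IsCyclic Q.range := Subgroup.isCyclic _
  obtain ⟨e'⟩ := aux_infCyclic Q.range
  refine ⟨e'.toMonoidHom.comp Q.rangeRestrict, ?_, ?_⟩
  · exact e'.surjective.comp Q.rangeRestrict_surjective
  · have hker : (e'.toMonoidHom.comp Q.rangeRestrict).ker = Q.ker := by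
      ext x
      simp only [MonoidHom.mem_ker, MonoidHom.comp_apply]
      constructor
      · intro h
        have : Q.rangeRestrict x = 1 := e'.injective (by simpa using h)
        have := congrArg Subtype.val this
        simpa [MonoidHom.mem_ker] using this
      · intro h
        have : Q.rangeRestrict x = 1 := by
          apply Subtype.ext
          simpa using h
        rw [this, map_one]
    rw [hker]
    exact hkerfin

lemma aux_split {G : Type} [Group G] (q : G →* Multiplicative ℤ) (hs : Function.Surjective q) :
    ∃ φ : Multiplicative ℤ →* MulAut q.ker, Nonempty (G ≃* q.ker ⋊[φ] Multiplicative ℤ) := by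
  obtain ⟨g₀, hg₀⟩ := hs (Multiplicative.ofAdd 1)
  set s : Multiplicative ℤ →* G := zpowersHom G g₀ with hsdef
  have hqs : ∀ z, q (s z) = z := by
    intro z
    show q (g₀ ^ Multiplicative.toAdd z) = z
    rw [map_zpow, hg₀, ← ofAdd_zsmul]
    simp
  set φ : Multiplicative ℤ →* MulAut q.ker := (MulAut.conjNormal (G := G) (H := q.ker)).comp s
    with hφ
  have hcond : ∀ z : Multiplicative ℤ, q.ker.subtype.comp (φ z).toMonoidHom
      = (MulAut.conj (s z)).toMonoidHom.comp q.ker.subtype := by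
    intro z
    ext k
    show ((MulAut.conjNormal (s z) k : q.ker) : G) = MulAut.conj (s z) (k : G)
    rw [MulAut.conjNormal_apply]
    rfl
  set L : q.ker ⋊[φ] Multiplicative ℤ →* G := SemidirectProduct.lift q.ker.subtype s hcond
    with hL
  have hLapp : ∀ x : q.ker ⋊[φ] Multiplicative ℤ, L x = (x.left : G) * s x.right := by
    intro x
    have : x = SemidirectProduct.inl x.left * SemidirectProduct.inr x.right := by
      rw [← SemidirectProduct.mk_eq_inl_mul_inr]
    conv_lhs => rw [this, map_mul, SemidirectProduct.lift_inl, SemidirectProduct.lift_inr]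
    rfl
  have hbij : Function.Bijective L := by
    constructor
    · intro x y hxy
      rw [hLapp, hLapp] at hxy
      have h1 : q ((x.left : G) * s x.right) = q ((y.left : G) * s y.right) := by rw [hxy]
      have hx1 : q (x.left : G) = 1 := x.left.2
      have hy1 : q (y.left : G) = 1 := y.left.2
      rw [map_mul, map_mul, hx1, hy1, one_mul, one_mul, hqs, hqs] at h1
      have h2 : (x.left : G) = (y.left : G) := by
        have := hxy
        rw [h1] at this
        exact mul_right_cancel this
      ext
      · exact h2
      · exact h1
    · intro g
      have hmem : g * (s (q g))⁻¹ ∈ q.ker := by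
        rw [MonoidHom.mem_ker, map_mul, map_inv, hqs, mul_inv_cancel]
      refine ⟨⟨⟨g * (s (q g))⁻¹, hmem⟩, q g⟩, ?_⟩
      rw [hLapp]
      simp
  exact ⟨φ, ⟨(MulEquiv.ofBijective L hbij).symm⟩⟩


/-- Every infinite virtually cyclic group `G` either admits an epimorphism onto `ℤ`
(and then `G ≅ F ⋊ ℤ` with `F` finite) or admits an epimorphism onto the infinite
dihedral group `D_∞` (realized as `DihedralGroup 0`) with finite kernel. -/
theorem stmt1 (G : Type) [Group G] [Infinite G]
    (hvc : ∃ C : Subgroup G, IsCyclic C ∧ C.index ≠ 0) :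
    (∃ f : G →* Multiplicative ℤ, Function.Surjective f ∧ Finite f.ker ∧
      ∃ φ : Multiplicative ℤ →* MulAut f.ker,
        Nonempty (G ≃* f.ker ⋊[φ] Multiplicative ℤ)) ∨
    (∃ f : G →* DihedralGroup 0, Function.Surjective f ∧ Finite f.ker) := by
  classical
  obtain ⟨C, hCcyc, hCi⟩ := hvc
  haveI : C.FiniteIndex := ⟨hCi⟩
  haveI := hCcyc
  set N := C.normalCore with hNdef
  haveI hNnorm : N.Normal := Subgroup.normalCore_normal C
  haveI : N.FiniteIndex := Subgroup.finiteIndex_normalCore C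
  haveI : Infinite N := by
    have h1 : Nat.card N * N.index = Nat.card G := Subgroup.card_mul_index N
    have h2 : Nat.card G = 0 := Nat.card_eq_zero_of_infinite
    have h3 : Nat.card N = 0 := by
      by_contra h
      exact (Nat.mul_ne_zero h (Subgroup.FiniteIndex.index_ne_zero)) (h1.trans h2)
    rcases Nat.card_eq_zero.mp h3 with h | h
    · exact (h.false (1 : N)).elim
    · exact h
  haveI : IsCyclic N := by
    have e := Subgroup.subgroupOfEquivOfLe (Subgroup.normalCore_le C)
    haveI : IsCyclic (N.subgroupOf C) := Subgroup.isCyclic _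
    exact isCyclic_of_surjective e.toMonoidHom e.surjective
  set ψ : G →* MulAut N := MulAut.conjNormal with hψdef
  by_cases hψ : ∀ g : G, ψ g = 1
  · -- Case A : N is central
    have hcen : N ≤ Subgroup.center G := by
      intro x hx
      rw [Subgroup.mem_center_iff]
      intro g
      have h1 : ψ g ⟨x, hx⟩ = ⟨x, hx⟩ := by rw [hψ g]; rfl
      have h2 : g * x * g⁻¹ = x := by
        have := congrArg Subtype.val h1
        simpa [hψdef, MulAut.conjNormal_apply] using this
      calc g * x = (g * x * g⁻¹) * g := by group
      _ = x * g := by rw [h2]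
    obtain ⟨q, hqs, hqk⟩ := aux_lemA N hcen
    obtain ⟨φ, hiso⟩ := aux_split q hqs
    exact Or.inl ⟨q, hqs, hqk, φ, hiso⟩
  · -- Case B
    push_neg at hψ
    obtain ⟨t, ht⟩ := hψ
    have hinv : ∀ g : G, ψ g ≠ 1 → ∀ x : N, ψ g x = x⁻¹ := fun g hg => aux_aut_inv (ψ g) hg
    set Gp := ψ.ker with hGp
    haveI hGpN : Gp.Normal := MonoidHom.normal_ker ψ
    have htGp : t ∉ Gp := by simpa [hGp, MonoidHom.mem_ker] using ht
    have hconj : ∀ g : G, g ∉ Gp → ∀ x : G, x ∈ N → g * x * g⁻¹ = x⁻¹ := by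
      intro g hg x hx
      have h1 := hinv g (by simpa [hGp, MonoidHom.mem_ker] using hg) ⟨x, hx⟩
      have := congrArg Subtype.val h1
      simpa [hψdef, MulAut.conjNormal_apply] using this
    have hfix : ∀ g : G, g ∈ Gp → ∀ x : G, x ∈ N → g * x * g⁻¹ = x := by
      intro g hg x hx
      have hg1 : ψ g = 1 := by rwa [hGp, MonoidHom.mem_ker] at hg
      have h1 : ψ g ⟨x, hx⟩ = ⟨x, hx⟩ := by rw [hg1]; rfl
      have := congrArg Subtype.val h1
      simpa [hψdef, MulAut.conjNormal_apply] using this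
    have hmul11 : ∀ x y : G, x ∉ Gp → y ∉ Gp → x * y ∈ Gp := by
      intro x y hx hy
      rw [hGp, MonoidHom.mem_ker, map_mul]
      refine MulEquiv.ext fun n => ?_
      show (ψ x) ((ψ y) n) = n
      rw [hinv y (by simpa [hGp, MonoidHom.mem_ker] using hy) n,
        hinv x (by simpa [hGp, MonoidHom.mem_ker] using hx) n⁻¹, inv_inv]
    have hmemmul : ∀ x y : G, x ∈ Gp → y ∉ Gp → x * y ∉ Gp := by
      intro x y hx hy h
      exact hy (by simpa [inv_mul_cancel_left] using mul_mem (inv_mem hx) h)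
    have hmemmul' : ∀ x y : G, x ∉ Gp → y ∈ Gp → x * y ∉ Gp := by
      intro x y hx hy h
      exact hx (by simpa [mul_inv_cancel_right] using mul_mem h (inv_mem hy))
    have hNGp : N ≤ Gp := by
      intro x hx
      rw [hGp, MonoidHom.mem_ker]
      refine MulEquiv.ext fun y => ?_
      show ψ x y = y
      obtain ⟨g, hgen⟩ := IsCyclic.exists_generator (α := N)
      obtain ⟨i, hi⟩ := hgen ⟨x, hx⟩
      obtain ⟨j, hj⟩ := hgen y
      apply Subtype.ext
      have happ : (ψ x y : G) = x * y * x⁻¹ := MulAut.conjNormal_apply x y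
      rw [happ]
      have hxc : x = ((g : G)) ^ i := by
        have := congrArg Subtype.val hi
        simpa [SubgroupClass.coe_zpow] using this.symm
      have hyc : (y : G) = ((g : G)) ^ j := by
        have := congrArg Subtype.val hj
        simpa [SubgroupClass.coe_zpow] using this.symm
      have hc : Commute x (y : G) := by
        rw [hxc, hyc]
        exact (Commute.refl ((g : G))).zpow_zpow i j
      rw [hc.eq, mul_inv_cancel_right]
    -- apply lemma A inside Gp
    set N' := N.subgroupOf Gp with hN'def
    have hcen' : N' ≤ Subgroup.center ↥Gp := by
      intro x hx
      rw [Subgroup.mem_center_iff]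
      intro g
      apply Subtype.ext
      show (g : G) * (x : G) = (x : G) * (g : G)
      have hxN : (x : G) ∈ N := by rwa [hN'def, Subgroup.mem_subgroupOf] at hx
      have h1 : (g : G) * (x : G) * (g : G)⁻¹ = (x : G) := hfix g g.2 (x : G) hxN
      calc (g : G) * (x : G) = ((g : G) * (x : G) * (g : G)⁻¹) * (g : G) := by group
      _ = (x : G) * (g : G) := by rw [h1]
    haveI : N'.FiniteIndex := by
      refine ⟨?_⟩
      intro h0
      have h1 : N.relIndex Gp * Gp.index = N.index := Subgroup.relIndex_mul_index hNGp
      have h2 : N.relIndex Gp = 0 := h0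
      rw [h2, zero_mul] at h1
      have h3 := @Subgroup.FiniteIndex.index_ne_zero G _ N _
      exact h3 h1.symm
    have eN' := Subgroup.subgroupOfEquivOfLe hNGp
    haveI : Infinite N' := Infinite.of_injective eN'.symm eN'.symm.injective
    haveI : IsCyclic N' := isCyclic_of_surjective eN'.symm.toMonoidHom eN'.symm.surjective
    obtain ⟨q, hqs, hqk⟩ := aux_lemA N' hcen'
    haveI := hqk
    -- conjugation by t on Gp
    set α : MulAut ↥Gp := MulAut.conjNormal t with hα
    set q' : ↥Gp →* Multiplicative ℤ := q.comp α.toMonoidHom with hq'def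
    have hαval : ∀ x : ↥Gp, ((α x : G)) = t * x * t⁻¹ := fun x => MulAut.conjNormal_apply t x
    have hq'val : ∀ x : ↥Gp, q' x = q (α x) := fun _ => rfl
    have hkk : ∀ x : ↥Gp, q x = 1 → q' x = 1 := by
      intro x hx
      have hxk : ∃ k : ℕ, k ≠ 0 ∧ x ^ k = 1 := by
        have hpos : 0 < orderOf (⟨x, hx⟩ : q.ker) := orderOf_pos _
        have hpow : (⟨x, hx⟩ : q.ker) ^ orderOf (⟨x, hx⟩ : q.ker) = 1 := pow_orderOf_eq_one _
        refine ⟨orderOf (⟨x, hx⟩ : q.ker), by omega, ?_⟩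
        have := congrArg (fun y : q.ker => (y : ↥Gp)) hpow
        exact this
      obtain ⟨k, hk0, hk⟩ := hxk
      have h1 : (q' x) ^ k = 1 := by rw [← map_pow, hk, map_one]
      have h2 : (k : ℤ) * Multiplicative.toAdd (q' x) = 0 := by
        have := congrArg Multiplicative.toAdd h1
        simpa [toAdd_pow, nsmul_eq_mul] using this
      have h3 : Multiplicative.toAdd (q' x) = 0 := by
        rcases mul_eq_zero.mp h2 with h | h
        · exact absurd (by exact_mod_cast h) hk0
        · exact h
      have := congrArg Multiplicative.ofAdd h3
      simpa using this
    obtain ⟨a, ha⟩ := hqs (Multiplicative.ofAdd 1)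
    have key1 : ∀ x : ↥Gp, q' x = (q' a) ^ (Multiplicative.toAdd (q x)) := by
      intro x
      have h1 : q (x * a ^ (-(Multiplicative.toAdd (q x)))) = 1 := by
        rw [map_mul, map_zpow, ha, ← ofAdd_zsmul]
        simp
      have h2 := hkk _ h1
      rw [map_mul, map_zpow, zpow_neg] at h2
      exact mul_inv_eq_one.mp h2
    -- find an element of N' with nontrivial image
    have hNn : ∃ x : ↥Gp, (x : G) ∈ N ∧ q x ≠ 1 := by
      by_contra h
      push_neg at h
      have hle : N' ≤ q.ker := by
        intro x hx
        rw [MonoidHom.mem_ker]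
        exact h x (by rwa [hN'def, Subgroup.mem_subgroupOf] at hx)
      have hfin : Finite ↥N' :=
        Finite.of_injective (Subgroup.inclusion hle) (Subgroup.inclusion_injective hle)
      haveI := hfin
      exact not_finite ↥N'
    obtain ⟨n₀, hn₀N, hn₀⟩ := hNn
    have qcongr : ∀ (x y : G) (hx : x ∈ Gp) (hy : y ∈ Gp), x = y →
        q ⟨x, hx⟩ = q ⟨y, hy⟩ := by
      intro x y hx hy h
      subst h
      rfl
    have hsign : q' a = Multiplicative.ofAdd (-1 : ℤ) := by
      have h2 : α n₀ = n₀⁻¹ := by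
        apply Subtype.ext
        rw [hαval]
        have := hconj t htGp (n₀ : G) hn₀N
        simpa using this
      have h1 : q' n₀ = (q n₀)⁻¹ := by rw [hq'val, h2, map_inv]
      have h3 := key1 n₀
      rw [h1] at h3
      set c := Multiplicative.toAdd (q n₀) with hc
      have hc0 : c ≠ 0 := by
        intro h
        apply hn₀
        have : q n₀ = Multiplicative.ofAdd c := by simp [hc]
        rw [this, h]
        rfl
      have h4 := congrArg Multiplicative.toAdd h3.symm
      have h5 : c * Multiplicative.toAdd (q' a) = -c := by
        simpa [toAdd_zpow, smul_eq_mul] using h4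
      have h6 : c * Multiplicative.toAdd (q' a) = c * (-1) := by rw [h5]; ring
      have h7 := mul_left_cancel₀ hc0 h6
      have := congrArg Multiplicative.ofAdd h7
      simpa using this
    have R : ∀ x : ↥Gp, q' x = (q x)⁻¹ := by
      intro x
      rw [key1 x, hsign, ← ofAdd_zsmul]
      simp [smul_eq_mul, mul_neg_one]
    have Rc : ∀ (x : G) (hx : x ∈ Gp) (hx2 : t * x * t⁻¹ ∈ Gp),
        q ⟨t * x * t⁻¹, hx2⟩ = (q ⟨x, hx⟩)⁻¹ := by
      intro x hx hx2
      have hα2 : α ⟨x, hx⟩ = ⟨t * x * t⁻¹, hx2⟩ := Subtype.ext (hαval _)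
      calc q ⟨t * x * t⁻¹, hx2⟩ = q (α ⟨x, hx⟩) := by rw [hα2]
      _ = q' ⟨x, hx⟩ := (hq'val _).symm
      _ = (q ⟨x, hx⟩)⁻¹ := R _
    have hconjmem : ∀ x : G, x ∈ Gp → t⁻¹ * x * t ∈ Gp := by
      intro x hx
      have := hGpN.conj_mem x hx t⁻¹
      simpa using this
    have hconjmem' : ∀ x : G, x ∈ Gp → t * x * t⁻¹ ∈ Gp := fun x hx => hGpN.conj_mem x hx t
    have Rc' : ∀ (x : G) (hx : x ∈ Gp) (hx2 : t⁻¹ * x * t ∈ Gp),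
        q ⟨t⁻¹ * x * t, hx2⟩ = (q ⟨x, hx⟩)⁻¹ := by
      intro x hx hx2
      have hmem2 : t * (t⁻¹ * x * t) * t⁻¹ ∈ Gp := by
        have he : t * (t⁻¹ * x * t) * t⁻¹ = x := by group
        rw [he]; exact hx
      have h1 := Rc (t⁻¹ * x * t) hx2 hmem2
      have h2 : q ⟨t * (t⁻¹ * x * t) * t⁻¹, hmem2⟩ = q ⟨x, hx⟩ := qcongr _ _ _ _ (by group)
      rw [h2] at h1
      rw [h1, inv_inv]
    have ht2mem : t * t ∈ Gp := hmul11 t t htGp htGp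
    have ht2 : q ⟨t * t, ht2mem⟩ = 1 := by
      have hmem2 : t * (t * t) * t⁻¹ ∈ Gp := by
        have he : t * (t * t) * t⁻¹ = t * t := by group
        rw [he]; exact ht2mem
      have h1 := Rc (t * t) ht2mem hmem2
      have h2 : q ⟨t * (t * t) * t⁻¹, hmem2⟩ = q ⟨t * t, ht2mem⟩ := qcongr _ _ _ _ (by group)
      rw [h2] at h1
      have h3 := congrArg Multiplicative.toAdd h1
      simp only [toAdd_inv] at h3
      have h4 : Multiplicative.toAdd (q ⟨t * t, ht2mem⟩) = 0 := by omega
      have := congrArg Multiplicative.ofAdd h4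
      simpa using this
    -- define the map to the infinite dihedral group
    have htinv : t⁻¹ ∉ Gp := fun h => htGp (by simpa using inv_mem h)
    have hmemiff : ∀ x : G, x ∉ Gp → t⁻¹ * x ∈ Gp := fun x hx => hmul11 t⁻¹ x htinv hx
    set Qf : ∀ x : G, x ∈ Gp → ℤ := fun x h => Multiplicative.toAdd (q ⟨x, h⟩) with hQf
    have Qcongr : ∀ (x y : G) (hx : x ∈ Gp) (hy : y ∈ Gp), x = y → Qf x hx = Qf y hy := by
      intro x y hx hy h
      subst h
      rfl
    have Qadd : ∀ (x y : G) (hx : x ∈ Gp) (hy : y ∈ Gp),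
        Qf (x * y) (mul_mem hx hy) = Qf x hx + Qf y hy := by
      intro x y hx hy
      have : q ⟨x * y, mul_mem hx hy⟩ = q ⟨x, hx⟩ * q ⟨y, hy⟩ := by
        rw [← map_mul]
        exact qcongr _ _ _ _ rfl
      simp [hQf, this]
    have Qconj' : ∀ (x : G) (hx : x ∈ Gp),
        Qf (t⁻¹ * x * t) (hconjmem x hx) = -Qf x hx := by
      intro x hx
      simp [hQf, Rc' x hx (hconjmem x hx)]
    have Qconj : ∀ (x : G) (hx : x ∈ Gp),
        Qf (t * x * t⁻¹) (hconjmem' x hx) = -Qf x hx := by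
      intro x hx
      simp [hQf, Rc x hx (hconjmem' x hx)]
    have Qt2 : Qf (t * t) ht2mem = 0 := by simp [hQf, ht2]
    set f : G → DihedralGroup 0 := fun x =>
      if h : x ∈ Gp then DihedralGroup.r (Qf x h : ZMod 0)
      else DihedralGroup.sr (Qf (t⁻¹ * x) (hmemiff x h) : ZMod 0) with hf
    have hfm : ∀ x y : G, f (x * y) = f x * f y := by
      intro x y
      by_cases hx : x ∈ Gp <;> by_cases hy : y ∈ Gp
      · have hxy : x * y ∈ Gp := mul_mem hx hy
        rw [hf]
        simp only [dif_pos hx, dif_pos hy, dif_pos hxy]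
        erw [DihedralGroup.r_mul_r]
        congr 1
        exact_mod_cast Qadd x y hx hy
      · have hxy : x * y ∉ Gp := hmemmul x y hx hy
        rw [hf]
        simp only [dif_pos hx, dif_neg hy, dif_neg hxy]
        erw [DihedralGroup.r_mul_sr]
        congr 1
        have h1 : Qf (t⁻¹ * (x * y)) (hmemiff _ hxy)
            = Qf ((t⁻¹ * x * t) * (t⁻¹ * y)) (mul_mem (hconjmem x hx) (hmemiff y hy)) :=
          Qcongr _ _ _ _ (by group)
        rw [h1, Qadd _ _ (hconjmem x hx) (hmemiff y hy), Qconj' x hx]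
        push_cast
        exact neg_add_eq_sub _ _
      · have hxy : x * y ∉ Gp := hmemmul' x y hx hy
        rw [hf]
        simp only [dif_neg hx, dif_pos hy, dif_neg hxy]
        erw [DihedralGroup.sr_mul_r]
        congr 1
        have h1 : Qf (t⁻¹ * (x * y)) (hmemiff _ hxy)
            = Qf ((t⁻¹ * x) * y) (mul_mem (hmemiff x hx) hy) :=
          Qcongr _ _ _ _ (by group)
        rw [h1, Qadd _ _ (hmemiff x hx) hy]
        exact rfl
      · have hxy : x * y ∈ Gp := hmul11 x y hx hy
        rw [hf]
        simp only [dif_neg hx, dif_neg hy, dif_pos hxy]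
        erw [DihedralGroup.sr_mul_sr]
        congr 1
        have hty : t * y ∈ Gp := hmul11 t y htGp hy
        have h1 : Qf (x * y) hxy
            = Qf ((t * (t⁻¹ * x) * t⁻¹) * (t * y)) (mul_mem (hconjmem' _ (hmemiff x hx)) hty) :=
          Qcongr _ _ _ _ (by group)
        have h2 : Qf (t * y) hty
            = Qf ((t * t) * (t⁻¹ * y)) (mul_mem ht2mem (hmemiff y hy)) :=
          Qcongr _ _ _ _ (by group)
        rw [h1, Qadd _ _ (hconjmem' _ (hmemiff x hx)) hty, Qconj _ (hmemiff x hx), h2,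
          Qadd _ _ ht2mem (hmemiff y hy), Qt2]
        push_cast
        exact (by rw [zero_add, neg_add_eq_sub] : -Qf (t⁻¹ * x) _ + (0 + Qf (t⁻¹ * y) _) = (_ : ℤ))
    set F : G →* DihedralGroup 0 := MonoidHom.mk' f hfm with hF
    refine Or.inr ⟨F, ?_, ?_⟩
    · -- surjectivity
      intro d
      cases d with
      | r i =>
        obtain ⟨x, hqx⟩ := hqs (Multiplicative.ofAdd (i : ℤ))
        refine ⟨(x : G), ?_⟩
        show f (x : G) = _
        rw [hf]
        simp only [dif_pos x.2]
        congr 1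
        all_goals (
          show Multiplicative.toAdd (q ⟨(x : G), x.2⟩) = i
          have hxx : (⟨(x : G), x.2⟩ : ↥Gp) = x := rfl
          rw [hxx, hqx]
          rfl)
      | sr i =>
        obtain ⟨u, hqu⟩ := hqs (Multiplicative.ofAdd (i : ℤ))
        have htu : t * (u : G) ∉ Gp := hmemmul' t (u : G) htGp u.2
        refine ⟨t * (u : G), ?_⟩
        show f (t * (u : G)) = _
        rw [hf]
        simp only [dif_neg htu]
        congr 1
        have h1 : Qf (t⁻¹ * (t * (u : G))) (hmemiff _ htu) = Qf (u : G) u.2 :=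
          Qcongr _ _ _ _ (by group)
        rw [h1]
        show Multiplicative.toAdd (q ⟨(u : G), u.2⟩) = i
        have huu : (⟨(u : G), u.2⟩ : ↥Gp) = u := rfl
        rw [huu, hqu]
        rfl
    · -- finite kernel
      have hker : ∀ x : G, F x = 1 → ∃ h : x ∈ Gp, q ⟨x, h⟩ = 1 := by
        intro x hx
        have hx' : f x = 1 := hx
        by_cases h : x ∈ Gp
        · refine ⟨h, ?_⟩
          rw [hf] at hx'
          simp only [dif_pos h] at hx'
          rw [DihedralGroup.one_def] at hx'
          have h2 : (Qf x h : ZMod 0) = 0 := by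
            injection hx'
          have h3 : Multiplicative.toAdd (q ⟨x, h⟩) = 0 := h2
          have := congrArg Multiplicative.ofAdd h3
          simpa using this
        · exfalso
          rw [hf] at hx'
          simp only [dif_neg h] at hx'
          rw [DihedralGroup.one_def] at hx'
          cases hx'
      have hinj : Function.Injective
          (fun x : F.ker => (⟨⟨(x : G), (hker (x : G) x.2).choose⟩,
            by rw [MonoidHom.mem_ker]; exact (hker (x : G) x.2).choose_spec⟩ : q.ker)) := by
        intro a b hab
        have h1 := congrArg (fun y : q.ker => ((y : ↥Gp) : G)) hab
        exact Subtype.ext h1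
      exact Finite.of_injective _ hinj
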